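/- Let V be a real inner product space and 𝔥 ⊆ 𝔰𝔬(V) a Lie subalgebra. A linear map R : Λ²V → 𝔥 satisfies the first Bianchi identity R(u,v)w + R(v,w)u + R(w,u)v = 0 for all u,v,w ∈ V if and only if for each fixed x ∈ V the map P = R(·,x) : V → 𝔥 satisfies ⟨P(u)v, w⟩ + ⟨P(v)w, u⟩ + ⟨P(w)u, v⟩ = 0 for all u,v,w ∈ V. -/

import Mathlib

open scoped RealInnerProductSpace

attribute [local instance] LieRing.ofAssociativeRing

/-- Auxiliary scalar lemma: for a 4-linear-like function antisymmetric in the first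
and last pairs, the Bianchi identity in the last three slots implies the Bianchi
identity in the first three slots. -/
lemma bianchi_aux {V : Type*} (T : V → V → V → V → ℝ)
    (h12 : ∀ a b c d, T b a c d = -T a b c d)
    (h34 : ∀ a b c d, T a b d c = -T a b c d)
    (hB : ∀ x u v w, T u x v w + T v x w u + T w x u v = 0) :
    ∀ u v w z, T u v w z + T v w u z + T w u v z = 0 := by
  have pairsym : ∀ a b c d, T a b c d = T c d a b := by
    intro a b c d
    linarith [hB a b c d, hB b c d a, hB c d a b, hB d a b c,
      h12 a b c d, h12 a c d b, h34 a c d b, h12 a d b c,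
      h12 b c d a, h34 b c d a, h12 b d a c, h34 b d a c,
      h12 c d a b, h34 b c a d, h34 b d c a, h34 a c b d]
  intro u v w z
  have h1 := pairsym u v w z
  have h2 := pairsym v w u z
  have h3 := pairsym w u v z
  have h4 := hB z u v w
  linarith

/-- For `R : Λ²V → 𝔥` (alternating, 𝔥-valued), the first Bianchi identity
holds iff for every `x` the map `P = R(·,x)` satisfies the cyclic identity of `𝒫(𝔥)`. -/
theorem bianchi_iff_cyclic
    {V : Type*} [NormedAddCommGroup V] [InnerProductSpace ℝ V] [FiniteDimensional ℝ V]
    (𝔥 : LieSubalgebra ℝ (Module.End ℝ V))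
    (hskew : ∀ A ∈ 𝔥, ∀ u v : V, ⟪A u, v⟫ = -⟪u, A v⟫)
    (R : V →ₗ[ℝ] V →ₗ[ℝ] Module.End ℝ V)
    (halt : ∀ u : V, R u u = 0)
    (hval : ∀ u v : V, R u v ∈ 𝔥) :
    (∀ u v w : V, R u v w + R v w u + R w u v = 0) ↔
      (∀ x u v w : V,
        ⟪R u x v, w⟫ + ⟪R v x w, u⟫ + ⟪R w x u, v⟫ = 0) := by
  -- antisymmetry of R in its two arguments
  have hR2 : ∀ a b : V, R b a = -R a b := by
    intro a b
    have h := halt (a + b)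
    simp only [map_add, LinearMap.add_apply, halt a, halt b, zero_add, add_zero] at h
    exact eq_neg_of_add_eq_zero_left h
  set T : V → V → V → V → ℝ := fun a b c d => ⟪R a b c, d⟫ with hT
  have h12 : ∀ a b c d, T b a c d = -T a b c d := by
    intro a b c d
    simp only [hT, hR2 a b, LinearMap.neg_apply, inner_neg_left]
  have h34 : ∀ a b c d, T a b d c = -T a b c d := by
    intro a b c d
    have := hskew (R a b) (hval a b) d c
    simp only [hT]
    rw [this, real_inner_comm]
  constructor
  · intro hb x u v w
    have hB' : ∀ x u v w : V,
        T v w u x + T w u v x + T u v w x = 0 := by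
      intro x u v w
      have h := hb u v w
      have : ⟪R u v w + R v w u + R w u v, x⟫ = (0 : ℝ) := by
        rw [h]; exact inner_zero_left x
      simp only [inner_add_left] at this
      simp only [hT]
      linarith
    have key := bianchi_aux (fun a b c d => T c d a b)
      (fun a b c d => h34 c d a b) (fun a b c d => h12 c d a b)
      (fun x u v w => hB' x u v w) u v w x
    simp only [hT] at key ⊢
    linarith
  · intro hc u v w
    have key : ∀ z : V, ⟪R u v w + R v w u + R w u v, z⟫ = (0 : ℝ) := by
      intro z
      have h := bianchi_aux T h12 h34 (fun x u v w => hc x u v w) u v w z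
      simp only [hT] at h
      simp only [inner_add_left]
      linarith
    have := key (R u v w + R v w u + R w u v)
    exact inner_self_eq_zero.mp this
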